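/- Let B_n and F_n be n×n real matrices and B_T and F_T be T×T real matrices. Assume that I_n − B_n, I_T − B_T, F_n, and F_T are all invertible. Then [(I_n − B_n)ᵀ F_n (I_n − B_n)]^{-1} ⊗ [(I_T − B_T)ᵀ F_T (I_T − B_T)]^{-1} = [(I_{nT} − B_{nT})ᵀ (F_n ⊗ F_T) (I_{nT} − B_{nT})]^{-1}, where B_{nT} = I_n ⊗ B_T + B_n ⊗ I_T − B_n ⊗ B_T and ⊗ denotes the Kronecker product. -/
import Mathlib


open Matrix Kronecker

/-- Theorem 3.1 (core identity): if `I_n − B_n`, `I_T − B_T`, `F_n`, `F_T` are invertible, then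
`[(I_n − B_n)ᵀ F_n (I_n − B_n)]⁻¹ ⊗ [(I_T − B_T)ᵀ F_T (I_T − B_T)]⁻¹
  = [(I_{nT} − B_{nT})ᵀ (F_n ⊗ F_T) (I_{nT} − B_{nT})]⁻¹`,
where `B_{nT} = I_n ⊗ B_T + B_n ⊗ I_T − B_n ⊗ B_T`. -/
theorem stmt3 (n T : ℕ)
    (Bn Fn : Matrix (Fin n) (Fin n) ℝ) (BT FT : Matrix (Fin T) (Fin T) ℝ)
    (hBn : IsUnit ((1 : Matrix (Fin n) (Fin n) ℝ) - Bn))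
    (hBT : IsUnit ((1 : Matrix (Fin T) (Fin T) ℝ) - BT))
    (hFn : IsUnit Fn) (hFT : IsUnit FT)
    (BnT : Matrix (Fin n × Fin T) (Fin n × Fin T) ℝ)
    (hBnT : BnT = (1 : Matrix (Fin n) (Fin n) ℝ) ⊗ₖ BT
        + Bn ⊗ₖ (1 : Matrix (Fin T) (Fin T) ℝ) - Bn ⊗ₖ BT) :
    (((1 : Matrix (Fin n) (Fin n) ℝ) - Bn)ᵀ * Fn * ((1 : Matrix (Fin n) (Fin n) ℝ) - Bn))⁻¹
        ⊗ₖ (((1 : Matrix (Fin T) (Fin T) ℝ) - BT)ᵀ * FT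
            * ((1 : Matrix (Fin T) (Fin T) ℝ) - BT))⁻¹ =
      ((1 - BnT)ᵀ * (Fn ⊗ₖ FT) * (1 - BnT))⁻¹ := by
  have key : (1 : Matrix (Fin n × Fin T) (Fin n × Fin T) ℝ) - BnT
      = ((1 : Matrix (Fin n) (Fin n) ℝ) - Bn) ⊗ₖ ((1 : Matrix (Fin T) (Fin T) ℝ) - BT) := by
    subst hBnT
    ext ⟨i, j⟩ ⟨k, l⟩
    simp only [Matrix.sub_apply, Matrix.add_apply, Matrix.kronecker_apply, Matrix.one_apply,
      Prod.mk.injEq]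
    split_ifs <;> simp_all <;> ring
  rw [key, ← Matrix.kroneckerMap_transpose, ← Matrix.mul_kronecker_mul,
    ← Matrix.mul_kronecker_mul, Matrix.inv_kronecker]
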